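/- Let x : [0, T) → F be a C¹ solution of the steepest descent equation ẋ(t) = −∇²h(x(t))⁻¹[I − Aᵀ(A∇²h(x(t))⁻¹Aᵀ)⁻¹A∇²h(x(t))⁻¹]∇f(x(t)). Then for every a ∈ ℝⁿ with Aa = b, and for every t ∈ [0, T), the function t ↦ D_h(a, x(t)) is differentiable with (d/dt) D_h(a, x(t)) + ⟨∇f(x(t)), x(t) − a⟩ = 0. -/

import Mathlib

noncomputable section
open Set Filter Topology Matrix MeasureTheory

abbrev E (n : ℕ) := EuclideanSpace ℝ (Fin n)

/-- Action of a matrix on a vector of `EuclideanSpace ℝ (Fin n)`. -/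
def matVec {n : ℕ} (M : Matrix (Fin n) (Fin n) ℝ) (v : E n) : E n := WithLp.toLp 2 (M.mulVec v)

/-- The continuous linear map on Euclidean space associated with a matrix. -/
def matCLM {n : ℕ} (M : Matrix (Fin n) (Fin n) ℝ) : E n →L[ℝ] E n :=
  LinearMap.toContinuousLinearMap (Matrix.toEuclideanLin M)

/-- The steepest descent vector field
`x ↦ −H(x)⁻¹[I − Aᵀ(A H(x)⁻¹ Aᵀ)⁻¹ A H(x)⁻¹] g(x)` for the Hessian metric. -/
def sdVF {n m : ℕ} (A : Matrix (Fin m) (Fin n) ℝ)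
    (Hess : E n → Matrix (Fin n) (Fin n) ℝ) (g : E n → E n) (x : E n) : E n :=
  -(matVec ((Hess x)⁻¹ * (1 - Aᵀ * (A * (Hess x)⁻¹ * Aᵀ)⁻¹ * A * (Hess x)⁻¹)) (g x))

/-- The `D`-function (Bregman distance) of `h`: `D_h(a,y) = h(a) − h(y) − ⟨∇h(y), a − y⟩`. -/
def Dh {n : ℕ} (h : E n → ℝ) (a y : E n) : ℝ :=
  h a - h y - (inner ℝ (gradient h y) (a - y) : ℝ)

lemma matCLM_apply {n : ℕ} (M : Matrix (Fin n) (Fin n) ℝ) (v : E n) :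
    matCLM M v = matVec M v := rfl

lemma inner_eq_dot {n : ℕ} (v w : E n) : (inner ℝ v w : ℝ) = dotProduct v.ofLp w.ofLp := by
  simp [PiLp.inner_apply, dotProduct, RCLike.inner_apply, mul_comm]

/-- Along any `C¹` solution of the steepest descent equation, for every
`a` with `Aa = b` the function `t ↦ D_h(a, x(t))` is differentiable with
`(d/dt) D_h(a,x(t)) + ⟨∇f(x(t)), x(t) − a⟩ = 0`. -/
theorem stmt5
    -- problem data: a full rank `m×n` matrix `A` (`m < n`), `b ∈ ℝᵐ`
    {n m : ℕ} (hm : 0 < m) (hmn : m < n)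
    (A : Matrix (Fin m) (Fin n) ℝ) (b : Fin m → ℝ) (hrank : A.rank = m)
    -- `C` is a nonempty open convex set, `F = C ∩ {x | Ax = b}` is nonempty
    (C : Set (E n)) (hCopen : IsOpen C) (hCconv : Convex ℝ C) (hCne : C.Nonempty)
    (hFne : (C ∩ {x | A.mulVec x = b}).Nonempty)
    (h : E n → ℝ) (Hess : E n → Matrix (Fin n) (Fin n) ℝ)
    -- `(H₀)`: `h` is of Legendre type with `int dom h = C`: it is strictly convex on `C`,
    -- `C²` on `C`, and its gradient blows up at the boundary of `C`;
    -- its Hessian `Hess` is positive definite and locally Lipschitz on `C`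
    (hhC2 : ContDiffOn ℝ 2 h C) (hhconv : ConvexOn ℝ C h) (hhstrict : StrictConvexOn ℝ C h)
    (hLeg : ∀ (z : ℕ → E n) (x' : E n), (∀ j, z j ∈ C) → x' ∈ frontier C →
      Tendsto z atTop (𝓝 x') → Tendsto (fun j => ‖gradient h (z j)‖) atTop atTop)
    (hHess : ∀ x ∈ C, HasFDerivAt (gradient h) (matCLM (Hess x)) x)
    (hHpos : ∀ x ∈ C, (Hess x).PosDef)
    (hHlip : ∀ x ∈ C, ∃ ε > 0, ∃ K : ℝ, ∀ y ∈ C ∩ Metric.ball x ε, ∀ z ∈ C ∩ Metric.ball x ε,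
      ‖matCLM (Hess y) - matCLM (Hess z)‖ ≤ K * ‖y - z‖)
    -- `f` is `C¹` with locally Lipschitz gradient
    (f : E n → ℝ) (hf : ContDiff ℝ 1 f)
    (hfgrad : ∀ x : E n, ∃ ε > 0, ∃ K : ℝ, ∀ y ∈ Metric.ball x ε, ∀ z ∈ Metric.ball x ε,
      ‖gradient f y - gradient f z‖ ≤ K * ‖y - z‖)
    -- the trajectory: a `C¹` solution of `(H-SD)` on `[0,T)` with values in `F`
    (T : ℝ) (hT : 0 < T) (x : ℝ → E n)
    (hmem : ∀ t ∈ Ico 0 T, x t ∈ C ∩ {z | A.mulVec z = b})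
    (hode : ∀ t ∈ Ico 0 T, HasDerivAt x (sdVF A Hess (gradient f) (x t)) t) :
    ∀ (a : E n), A.mulVec a = b → ∀ t ∈ Ico 0 T,
      HasDerivAt (fun s => Dh h a (x s))
        (-(inner ℝ (gradient f (x t)) (x t - a) : ℝ)) t := by
  intro a ha t ht
  obtain ⟨hyC, hyA⟩ := hmem t ht
  set y := x t with hy
  set v : E n := sdVF A Hess (gradient f) y with hv
  have hx : HasDerivAt x v t := hode t ht
  -- differentiability of h at y
  have hdh : DifferentiableAt ℝ h y :=
    ((hhC2.differentiableOn (by norm_num)).differentiableAt (hCopen.mem_nhds hyC))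
  have hg : HasGradientAt h (gradient h y) y := hdh.hasGradientAt
  -- derivative of h ∘ x
  have d1 : HasDerivAt (fun s => h (x s)) ((inner ℝ (gradient h y) v : ℝ)) t := by
    have := hg.hasFDerivAt.comp_hasDerivAt t hx
    exact this
  -- derivative of gradient h ∘ x
  have d2 : HasDerivAt (fun s => gradient h (x s)) (matVec (Hess y) v) t := by
    have := (hHess y hyC).comp_hasDerivAt t hx
    exact this
  -- derivative of s ↦ a - x s
  have d3 : HasDerivAt (fun s => a - x s) (-v) t := by
    have := (hasDerivAt_const t a).sub hx
    rw [zero_sub] at this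
    exact this
  -- derivative of inner term
  have d4 : HasDerivAt (fun s => (inner ℝ (gradient h (x s)) (a - x s) : ℝ))
      ((inner ℝ (gradient h y) (-v) : ℝ) + (inner ℝ (matVec (Hess y) v) (a - y) : ℝ)) t :=
    d2.inner ℝ d3
  have d5 : HasDerivAt (fun s => Dh h a (x s))
      (0 - (inner ℝ (gradient h y) v : ℝ)
        - ((inner ℝ (gradient h y) (-v) : ℝ) + (inner ℝ (matVec (Hess y) v) (a - y) : ℝ))) t :=
    ((hasDerivAt_const t (h a)).sub d1).sub d4
  -- the algebraic identity
  have hdet : IsUnit (Hess y).det :=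
    isUnit_iff_ne_zero.mpr (hHpos y hyC).det_pos.ne'
  set W : Matrix (Fin m) (Fin n) ℝ := (A * (Hess y)⁻¹ * Aᵀ)⁻¹ * A * (Hess y)⁻¹ with hW
  have key : matVec (Hess y) v = -(gradient f y) + matVec (Aᵀ * W) (gradient f y) := by
    rw [hv]
    unfold sdVF matVec
    rw [WithLp.ofLp_neg, WithLp.ofLp_toLp]
    rw [Matrix.mulVec_neg, Matrix.mulVec_mulVec,
      Matrix.mul_nonsing_inv_cancel_left _ _ hdet, Matrix.sub_mulVec, Matrix.one_mulVec,
      neg_sub, hW, ← Matrix.mul_assoc, ← Matrix.mul_assoc]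
    rw [WithLp.toLp_sub, WithLp.toLp_ofLp]
    module
  have orth : (inner ℝ (matVec (Aᵀ * W) (gradient f y)) (a - y) : ℝ) = 0 := by
    rw [inner_eq_dot]
    unfold matVec
    rw [← Matrix.mulVec_mulVec, Matrix.mulVec_transpose, ← Matrix.dotProduct_mulVec]
    have h0 : A.mulVec ((a - y : E n) : Fin n → ℝ) = 0 := by
      have hsub : A.mulVec ((a - y : E n) : Fin n → ℝ) = A.mulVec a - A.mulVec y :=
        Matrix.mulVec_sub A a y
      rw [hsub, ha, hyA, sub_self]
    rw [h0, dotProduct_zero]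
  have heq : (0 - (inner ℝ (gradient h y) v : ℝ)
        - ((inner ℝ (gradient h y) (-v) : ℝ) + (inner ℝ (matVec (Hess y) v) (a - y) : ℝ)))
      = -(inner ℝ (gradient f (x t)) (x t - a) : ℝ) := by
    rw [key, inner_add_left, orth, inner_neg_right, ← hy]
    have h1 : (inner ℝ (-(gradient f y)) (a - y) : ℝ) = (inner ℝ (gradient f y) (y - a) : ℝ) := by
      rw [inner_neg_left, ← inner_neg_right, neg_sub]
    rw [h1]
    ring
  rw [← heq]
  exact d5
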